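/- With ν defined as the integrated ratio ∫ Var(E[1{Y>t}|X])/Var(1{Y>t}) dμ̃(t), if Y and X are independent then ν(Y,X) = 0, and if Y = f(X) almost surely for some measurable f then ν(Y,X) = 1. -/

import Mathlib

open MeasureTheory ProbabilityTheory Classical

noncomputable section

/-- The indicator of the event `{Y > t}`. -/
def indGT {Ω : Type*} (Y : Ω → ℝ) (t : ℝ) : Ω → ℝ := fun ω => if Y ω > t then 1 else 0

/-- The (topological) support of a measure on `ℝ`: points all of whose neighbourhoods
have positive measure. -/
def msupport (ρ : Measure ℝ) : Set ℝ :=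
  {x | ∀ ε > (0 : ℝ), ρ (Set.Ioo (x - ε) (x + ε)) ≠ 0}

/-- `S̃`: the support with its maximum removed, if the support attains a maximum. -/
def tildeSet (ρ : Measure ℝ) : Set ℝ :=
  if h : ∃ m, IsGreatest (msupport ρ) m then msupport ρ \ {h.choose} else msupport ρ

/-- `μ̃`: the law `ρ` restricted to `S̃` and renormalized. -/
def tildeMeasure (ρ : Measure ℝ) : Measure ℝ :=
  (ρ (tildeSet ρ))⁻¹ • ρ.restrict (tildeSet ρ)

/-- The dependence measure
`ν(Y, X) = ∫ Var(E[1{Y > t} | X]) / Var(1{Y > t}) dμ̃(t)`,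
where the integrand is defined to be `1` whenever `Var(1{Y > t}) = 0`. -/
def nu {Ω : Type*} [MeasurableSpace Ω] (μ : Measure Ω) (Y : Ω → ℝ)
    {E : Type*} [MeasurableSpace E] (X : Ω → E) : ℝ :=
  ∫ t, (if variance (indGT Y t) μ = 0 then 1
        else variance (μ[indGT Y t | MeasurableSpace.comap X inferInstance]) μ
              / variance (indGT Y t) μ)
    ∂ tildeMeasure (Measure.map Y μ)

end

section Aux

noncomputable section

open Set

lemma isClosed_msupport (ρ : Measure ℝ) : IsClosed (msupport ρ) := by
  rw [← isOpen_compl_iff, Metric.isOpen_iff]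
  intro x hx
  simp only [msupport, Set.mem_compl_iff, Set.mem_setOf_eq, not_forall] at hx
  push_neg at hx
  obtain ⟨ε, hε, h0⟩ := hx
  refine ⟨ε / 2, by linarith, ?_⟩
  intro y hy
  rw [Metric.mem_ball, Real.dist_eq] at hy
  obtain ⟨h1, h2⟩ := abs_lt.1 hy
  intro hmem
  apply hmem (ε / 2) (by linarith)
  apply measure_mono_null _ h0
  intro z hz
  simp only [Set.mem_Ioo] at hz ⊢
  constructor <;> linarith [hz.1, hz.2]

lemma measure_compl_msupport (ρ : Measure ℝ) : ρ (msupport ρ)ᶜ = 0 := by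
  have hsub : (msupport ρ)ᶜ ⊆
      ⋃ p : {p : ℚ × ℚ // ρ (Set.Ioo (p.1 : ℝ) (p.2 : ℝ)) = 0},
        Set.Ioo ((p : ℚ × ℚ).1 : ℝ) ((p : ℚ × ℚ).2 : ℝ) := by
    intro x hx
    simp only [msupport, Set.mem_compl_iff, Set.mem_setOf_eq, not_forall] at hx
    push_neg at hx
    obtain ⟨ε, hε, h0⟩ := hx
    obtain ⟨q, hq1, hq2⟩ := exists_rat_btwn (show x - ε < x by linarith)
    obtain ⟨r, hr1, hr2⟩ := exists_rat_btwn (show x < x + ε by linarith)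
    have hnull : ρ (Set.Ioo (q : ℝ) (r : ℝ)) = 0 := by
      apply measure_mono_null _ h0
      intro y hy
      exact ⟨by linarith [hy.1], by linarith [hy.2]⟩
    exact Set.mem_iUnion.2 ⟨⟨(q, r), hnull⟩, hq2, hr1⟩
  apply measure_mono_null hsub
  exact measure_iUnion_null fun p => p.2

lemma tildeSet_subset (ρ : Measure ℝ) : tildeSet ρ ⊆ msupport ρ := by
  unfold tildeSet; split_ifs with h
  · exact Set.diff_subset
  · exact subset_rfl

lemma measurableSet_tildeSet (ρ : Measure ℝ) : MeasurableSet (tildeSet ρ) := by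
  unfold tildeSet; split_ifs with h
  · exact (isClosed_msupport ρ).measurableSet.diff (measurableSet_singleton _)
  · exact (isClosed_msupport ρ).measurableSet

lemma measure_tildeSet_ne_zero (ρ : Measure ℝ) [IsProbabilityMeasure ρ]
    (h : ∀ c : ℝ, ρ {c} ≠ 1) : ρ (tildeSet ρ) ≠ 0 := by
  have hms : ρ (msupport ρ) = 1 := by
    have h1 := measure_compl_msupport ρ
    have := measure_add_measure_compl (isClosed_msupport ρ).measurableSet (μ := ρ)
    rw [h1, add_zero] at this
    rw [this, measure_univ]
  unfold tildeSet
  split_ifs with hg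
  · intro h0
    apply h hg.choose
    have hle : ρ (msupport ρ) ≤ ρ {hg.choose} + ρ (msupport ρ \ {hg.choose}) := by
      refine le_trans (measure_mono ?_) (measure_union_le _ _)
      intro x hx
      by_cases hxc : x = hg.choose
      · exact Or.inl hxc
      · exact Or.inr ⟨hx, hxc⟩
    rw [hms, h0, add_zero] at hle
    exact le_antisymm prob_le_one hle
  · rw [hms]; exact one_ne_zero

lemma tildeMeasure_isProbabilityMeasure (ρ : Measure ℝ) [IsProbabilityMeasure ρ]
    (h : ∀ c : ℝ, ρ {c} ≠ 1) : IsProbabilityMeasure (tildeMeasure ρ) := by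
  constructor
  rw [tildeMeasure, Measure.smul_apply, Measure.restrict_apply MeasurableSet.univ,
    Set.univ_inter, smul_eq_mul]
  exact ENNReal.inv_mul_cancel (measure_tildeSet_ne_zero ρ h) (measure_ne_top ρ _)

lemma tildeMeasure_null_of_null (ρ : Measure ℝ) {s : Set ℝ} (hs : ρ s = 0) :
    tildeMeasure ρ s = 0 := by
  rw [tildeMeasure, Measure.smul_apply, smul_eq_mul]
  have : ρ.restrict (tildeSet ρ) s = 0 :=
    le_antisymm (hs ▸ Measure.restrict_le_self s) zero_le
  rw [this, mul_zero]

lemma null_Iic_set (ρ : Measure ℝ) [IsProbabilityMeasure ρ] :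
    ρ {t | ρ (Set.Iic t) = 0} = 0 := by
  set A := {t | ρ (Set.Iic t) = 0} with hA
  rcases Set.eq_empty_or_nonempty A with h | h
  · simp [h]
  by_cases hb : BddAbove A
  · set a := sSup A with ha
    by_cases haA : a ∈ A
    · exact measure_mono_null (fun t ht => le_csSup hb ht) haA
    · have hsub : A ⊆ ⋃ n : ℕ, Set.Iic (a - 1 / (n + 1)) := by
        intro t ht
        have htlt : t < a := lt_of_le_of_ne (le_csSup hb ht) (fun he => haA (he ▸ ht))
        obtain ⟨n, hn⟩ := exists_nat_one_div_lt (show 0 < a - t by linarith)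
        refine Set.mem_iUnion.2 ⟨n, ?_⟩
        simp only [Set.mem_Iic]
        linarith
      refine measure_mono_null hsub (measure_iUnion_null ?_)
      intro n
      have hlt : a - 1 / (n + 1) < a := by
        have : (0:ℝ) < 1 / ((n:ℝ) + 1) := by positivity
        linarith
      obtain ⟨t, htA, htgt⟩ := exists_lt_of_lt_csSup h hlt
      exact measure_mono_null (Set.Iic_subset_Iic.2 htgt.le) htA
  · exfalso
    rw [not_bddAbove_iff] at hb
    have : ρ Set.univ = 0 := by
      have hsub : Set.univ ⊆ ⋃ n : ℕ, Set.Iic (n : ℝ) := by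
        intro x _
        obtain ⟨n, hn⟩ := exists_nat_gt x
        exact Set.mem_iUnion.2 ⟨n, hn.le⟩
      refine measure_mono_null hsub (measure_iUnion_null ?_)
      intro n
      obtain ⟨t, htA, htgt⟩ := hb n
      exact measure_mono_null (Set.Iic_subset_Iic.2 htgt.le) htA
    rw [measure_univ] at this
    exact one_ne_zero this

lemma Ioi_inter_tildeSet (ρ : Measure ℝ) :
    {t | ρ (Set.Ioi t) = 0} ∩ tildeSet ρ = ∅ := by
  rw [Set.eq_empty_iff_forall_notMem]
  rintro t ⟨hB, hT⟩
  have htm : t ∈ msupport ρ := tildeSet_subset ρ hT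
  have hgr : IsGreatest (msupport ρ) t := by
    refine ⟨htm, fun s hs => ?_⟩
    by_contra hlt
    push_neg at hlt
    apply hs ((s - t) / 2) (by linarith)
    apply measure_mono_null _ hB
    intro y hy
    simp only [Set.mem_Ioi]
    have := hy.1
    simp only [Set.mem_Ioo] at hy
    linarith [hy.1]
  have hex : ∃ m, IsGreatest (msupport ρ) m := ⟨t, hgr⟩
  unfold tildeSet at hT
  rw [dif_pos hex] at hT
  exact hT.2 (hgr.unique hex.choose_spec)

lemma variance_congr' {Ω : Type*} [MeasurableSpace Ω] {μ : Measure Ω} {f g : Ω → ℝ}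
    (h : f =ᵐ[μ] g) : variance f μ = variance g μ := by
  unfold ProbabilityTheory.variance ProbabilityTheory.evariance
  have hint : (∫ x, f x ∂μ) = ∫ x, g x ∂μ := integral_congr_ae h
  rw [hint]
  congr 1
  apply lintegral_congr_ae
  filter_upwards [h] with ω hω
  rw [hω]

lemma variance_const' {Ω : Type*} [MeasurableSpace Ω] (μ : Measure Ω) [IsProbabilityMeasure μ]
    (c : ℝ) : variance (fun _ => c) μ = 0 := by
  unfold ProbabilityTheory.variance ProbabilityTheory.evariance
  simp

end

end Aux

section Aux2

lemma indGT_eq_indicator {Ω : Type*} (Y : Ω → ℝ) (t : ℝ) :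
    indGT Y t = Set.indicator (Y ⁻¹' Set.Ioi t) (fun _ => (1:ℝ)) := by
  funext ω
  simp only [indGT, Set.indicator, Set.mem_preimage, Set.mem_Ioi]

lemma variance_indGT {Ω : Type*} [MeasurableSpace Ω] (μ : Measure Ω) [IsProbabilityMeasure μ]
    {Y : Ω → ℝ} (hY : Measurable Y) (t : ℝ) :
    variance (indGT Y t) μ
      = (μ (Y ⁻¹' Set.Ioi t)).toReal - (μ (Y ⁻¹' Set.Ioi t)).toReal ^ 2 := by
  have hs : MeasurableSet (Y ⁻¹' Set.Ioi t) := hY measurableSet_Ioi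
  have hmem : MemLp (indGT Y t) 2 μ := by
    rw [indGT_eq_indicator]
    exact memLp_indicator_const 2 hs 1 (Or.inr (measure_ne_top μ _))
  rw [variance_eq_sub hmem]
  have hsq : (indGT Y t) ^ 2 = indGT Y t := by
    funext ω
    simp only [Pi.pow_apply, indGT]
    split_ifs <;> norm_num
  have hint : (∫ ω, indGT Y t ω ∂μ) = (μ (Y ⁻¹' Set.Ioi t)).toReal := by
    rw [indGT_eq_indicator, integral_indicator_const _ hs]
    simp [Measure.real]
  rw [hsq, hint]

lemma variance_indGT_ne_zero {Ω : Type*} [MeasurableSpace Ω] (μ : Measure Ω)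
    [IsProbabilityMeasure μ] {Y : Ω → ℝ} (hY : Measurable Y) {t : ℝ}
    (h1 : μ (Y ⁻¹' Set.Ioi t) ≠ 0) (h2 : μ (Y ⁻¹' Set.Iic t) ≠ 0) :
    variance (indGT Y t) μ ≠ 0 := by
  rw [variance_indGT μ hY t]
  set p := (μ (Y ⁻¹' Set.Ioi t)).toReal with hp
  have hp0 : 0 < p := ENNReal.toReal_pos h1 (measure_ne_top μ _)
  have hcompl : Y ⁻¹' Set.Iic t = (Y ⁻¹' Set.Ioi t)ᶜ := by
    ext ω; simp [not_lt]
  have hlt : μ (Y ⁻¹' Set.Ioi t) < 1 := by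
    rcases lt_or_ge (μ (Y ⁻¹' Set.Ioi t)) 1 with h | h
    · exact h
    · exfalso
      apply h2
      have hone : μ (Y ⁻¹' Set.Ioi t) = 1 := le_antisymm prob_le_one h
      rw [hcompl, measure_compl (hY measurableSet_Ioi) (measure_ne_top μ _), hone,
        measure_univ, tsub_self]
  have hp1 : p < 1 := by
    have := (ENNReal.toReal_lt_toReal (measure_ne_top μ _) ENNReal.one_ne_top).2 hlt
    simpa using this
  nlinarith

end Aux2

/-- If `Y` and `X` are independent then `ν(Y,X) = 0`, and if `Y = f(X)` a.s. for some
measurable `f` then `ν(Y,X) = 1`. -/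
theorem stmt_4 {Ω : Type*} [MeasurableSpace Ω] (μ : Measure Ω) [IsProbabilityMeasure μ]
    {p : ℕ} (Y : Ω → ℝ) (X : Ω → EuclideanSpace ℝ (Fin p))
    (hY : Measurable Y) (hX : Measurable X)
    (hconst : ¬ ∃ c : ℝ, ∀ᵐ ω ∂μ, Y ω = c) :
    (IndepFun Y X μ → nu μ Y X = 0) ∧
    ((∃ f : EuclideanSpace ℝ (Fin p) → ℝ, Measurable f ∧ Y =ᵐ[μ] fun ω => f (X ω)) →
      nu μ Y X = 1) := by
  set ρ := Measure.map Y μ with hρ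
  haveI hρprob : IsProbabilityMeasure ρ := Measure.isProbabilityMeasure_map hY.aemeasurable
  have hnc : ∀ c : ℝ, ρ {c} ≠ 1 := by
    intro c hc
    apply hconst
    refine ⟨c, ?_⟩
    have hone : μ (Y ⁻¹' {c}) = 1 := by
      rw [hρ, Measure.map_apply hY (measurableSet_singleton c)] at hc
      exact hc
    have h0 : μ ((Y ⁻¹' {c})ᶜ) = 0 := by
      rw [measure_compl (hY (measurableSet_singleton c)) (measure_ne_top μ _), hone,
        measure_univ, tsub_self]
    rw [ae_iff]
    have hset : {ω | ¬ Y ω = c} = (Y ⁻¹' {c})ᶜ := by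
      ext ω; simp
    rw [hset]
    exact h0
  haveI hprob : IsProbabilityMeasure (tildeMeasure ρ) := tildeMeasure_isProbabilityMeasure ρ hnc
  -- a.e. t, the variance of the indicator is nonzero
  have hVarNe : ∀ᵐ t ∂ tildeMeasure ρ, variance (indGT Y t) μ ≠ 0 := by
    rw [ae_iff]
    simp only [ne_eq, not_not]
    have hWsub : {t | variance (indGT Y t) μ = 0}
        ⊆ {t | ρ (Set.Iic t) = 0} ∪ {t | ρ (Set.Ioi t) = 0} := by
      intro t ht
      by_contra hmem
      rw [Set.mem_union] at hmem
      simp only [Set.mem_union, Set.mem_setOf_eq] at hmem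
      push_neg at hmem
      refine variance_indGT_ne_zero μ hY ?_ ?_ ht
      · rw [← Measure.map_apply hY measurableSet_Ioi]; exact hmem.2
      · rw [← Measure.map_apply hY measurableSet_Iic]; exact hmem.1
    apply measure_mono_null hWsub
    apply measure_union_null
    · exact tildeMeasure_null_of_null ρ (null_Iic_set ρ)
    · rw [tildeMeasure, Measure.smul_apply, smul_eq_mul,
        Measure.restrict_apply' (measurableSet_tildeSet ρ), Ioi_inter_tildeSet ρ,
        measure_empty, mul_zero]
  constructor
  · -- independence implies nu = 0
    intro hindep
    unfold nu
    rw [← hρ]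
    apply integral_eq_zero_of_ae
    have hcond : ∀ t : ℝ, μ[indGT Y t | MeasurableSpace.comap X inferInstance]
        =ᵐ[μ] fun _ => ∫ ω, indGT Y t ω ∂μ := by
      intro t
      have hYm : Measurable[MeasurableSpace.comap Y inferInstance] Y :=
        measurable_iff_comap_le.mpr le_rfl
      have hg : Measurable (fun u : ℝ => if u > t then (1:ℝ) else 0) := by
        apply Measurable.ite _ measurable_const measurable_const
        exact measurableSet_Ioi
      refine condExp_indep_eq hY.comap_le hX.comap_le
        ((hg.comp hYm).stronglyMeasurable) ?_
      exact (IndepFun_iff_Indep Y X μ).1 hindep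
    filter_upwards [hVarNe] with t hVar
    simp only [Pi.zero_apply]
    rw [if_neg hVar, variance_congr' (hcond t), variance_const', zero_div]
  · -- Y = f(X) a.s. implies nu = 1
    rintro ⟨f, hf, hYf⟩
    unfold nu
    rw [← hρ]
    have hint1 : ∀ t : ℝ, (if variance (indGT Y t) μ = 0 then (1:ℝ)
        else variance (μ[indGT Y t | MeasurableSpace.comap X inferInstance]) μ
              / variance (indGT Y t) μ) = 1 := by
      intro t
      have hae : indGT Y t =ᵐ[μ] fun ω => indGT f t (X ω) := by
        filter_upwards [hYf] with ω hω
        simp only [indGT, hω]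
      have hXm : Measurable[MeasurableSpace.comap X inferInstance] X :=
        measurable_iff_comap_le.mpr le_rfl
      have hgm0 : Measurable (indGT f t) := by
        apply Measurable.ite _ measurable_const measurable_const
        exact hf measurableSet_Ioi
      have hgm : Measurable[MeasurableSpace.comap X inferInstance]
          (fun ω => indGT f t (X ω)) := hgm0.comp hXm
      have hintg : Integrable (fun ω => indGT f t (X ω)) μ := by
        refine Integrable.mono' (integrable_const (1:ℝ))
          ((hgm0.comp hX).aestronglyMeasurable) (ae_of_all _ fun ω => ?_)
        simp only [indGT]
        split_ifs <;> norm_num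
      have hce : μ[indGT Y t | MeasurableSpace.comap X inferInstance] =ᵐ[μ] indGT Y t := by
        calc μ[indGT Y t | MeasurableSpace.comap X inferInstance]
            =ᵐ[μ] μ[(fun ω => indGT f t (X ω)) | MeasurableSpace.comap X inferInstance] :=
              condExp_congr_ae hae
          _ = fun ω => indGT f t (X ω) :=
              condExp_of_stronglyMeasurable hX.comap_le hgm.stronglyMeasurable hintg
          _ =ᵐ[μ] indGT Y t := hae.symm
      rw [variance_congr' hce]
      by_cases hv : variance (indGT Y t) μ = 0
      · rw [if_pos hv]
      · rw [if_neg hv, div_self hv]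
    simp only [hint1]
    simp [integral_const]
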